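/- Let $q = p^{\beta}$ with $p$ an odd prime, $\beta \geq 2$, and let $a, b$ be integers with $p \nmid ab$. If $ab$ is a quadratic non-residue modulo $p$, then $S(a,b;q) = 0$. -/

import Mathlib

/-- The classical Kloosterman sum `S(a,b;c)`. -/
noncomputable def kloosterman (a b : ℤ) (c : ℕ) : ℂ :=
  ∑ x ∈ Finset.range c, if Nat.gcd x c = 1 then
    Complex.exp (2 * Real.pi * Complex.I *
      ((a : ℂ) * (x : ℂ) + (b : ℂ) * ((((x : ZMod c)⁻¹).val : ℕ) : ℂ)) / (c : ℂ))
  else 0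

private lemma exp_congr' (q : ℕ) (hq : q ≠ 0) {n n' : ℤ} (h : (q:ℤ) ∣ n - n') :
    Complex.exp (2 * Real.pi * Complex.I * (n:ℂ) / q) =
    Complex.exp (2 * Real.pi * Complex.I * (n':ℂ) / q) := by
  obtain ⟨k, hk⟩ := h
  have hqC : (q:ℂ) ≠ 0 := Nat.cast_ne_zero.mpr hq
  have hn : (n:ℂ) = (n':ℂ) + (q:ℂ) * (k:ℂ) := by
    have := congrArg (fun t : ℤ => (t:ℂ)) hk
    push_cast at this
    linear_combination this
  rw [hn, show 2*(Real.pi:ℂ)*Complex.I*((n':ℂ)+(q:ℂ)*(k:ℂ))/q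
      = 2*(Real.pi:ℂ)*Complex.I*(n':ℂ)/q + (k:ℂ)*(2*(Real.pi:ℂ)*Complex.I) by
        field_simp,
    Complex.exp_add, Complex.exp_int_mul_two_pi_mul_I, mul_one]

theorem stmt6 (p : ℕ) (hp : p.Prime) (hodd : Odd p) (β : ℕ) (hβ : 2 ≤ β)
    (a b : ℤ) (hab : ¬ ((p : ℤ) ∣ a * b))
    (hqnr : ¬ IsSquare ((a * b : ℤ) : ZMod p)) :
    kloosterman a b (p ^ β) = 0 := by
  have hp1 : 1 < p := hp.one_lt
  set q := p ^ β with hqdef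
  set m := p ^ (β - 1) with hmdef
  have hq0 : q ≠ 0 := pow_ne_zero _ hp.pos.ne'
  have hm0 : 0 < m := pow_pos hp.pos _
  have hqm : q = m * p := by rw [hqdef, hmdef, ← pow_succ]; congr 1; omega
  have hpm : p ∣ m := dvd_pow_self p (by omega)
  have hqmm : q ∣ m * m := by
    rw [hqdef, hmdef, ← pow_add]
    exact pow_dvd_pow p (by omega)
  have : NeZero q := ⟨hq0⟩
  rw [kloosterman]
  -- reindex the sum
  have reindex : ∀ f : ℕ → ℂ, ∑ x ∈ Finset.range q, f x
      = ∑ y ∈ Finset.range m, ∑ z ∈ Finset.range p, f (y + m*z) := by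
    intro f
    rw [hqm, ← Finset.sum_product']
    refine (Finset.sum_nbij' (fun yz => yz.1 + m*yz.2) (fun x => (x % m, x / m))
      ?_ ?_ ?_ ?_ ?_).symm
    · rintro ⟨y, z⟩ h
      simp only [Finset.mem_product, Finset.mem_range] at h ⊢
      calc y + m*z < m + m*z := by omega
        _ = m*(z+1) := by ring
        _ ≤ m*p := Nat.mul_le_mul_left m (by omega)
    · intro x hx
      simp only [Finset.mem_product, Finset.mem_range] at hx ⊢
      exact ⟨Nat.mod_lt _ hm0, Nat.div_lt_of_lt_mul (by omega)⟩
    · rintro ⟨y, z⟩ h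
      simp only [Finset.mem_product, Finset.mem_range] at h
      simp [Nat.add_mul_mod_self_left, Nat.mod_eq_of_lt h.1,
        Nat.add_mul_div_left _ _ hm0, Nat.div_eq_of_lt h.1]
    · intro x hx
      exact Nat.mod_add_div x m
    · rintro ⟨y, z⟩ h; rfl
  rw [reindex]
  apply Finset.sum_eq_zero
  intro y hy
  simp only [Finset.mem_range] at hy
  by_cases hpy : p ∣ y
  · -- all terms vanish since gcd ≠ 1
    apply Finset.sum_eq_zero
    intro z hz
    rw [if_neg]
    intro hgcd
    have h1 : p ∣ y + m*z := hpy.add (hpm.mul_right z)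
    have h2 : p ∣ q := by rw [hqm]; exact dvd_mul_left p m
    have := Nat.dvd_gcd h1 h2
    rw [hgcd] at this
    have := Nat.dvd_one.mp this
    omega
  · -- the main case
    have hcyp : Nat.Coprime y p := (Nat.coprime_comm.mp ((hp.coprime_iff_not_dvd).mpr hpy))
    have hunit : IsUnit ((y : ℕ) : ZMod q) := by
      rw [ZMod.isUnit_iff_coprime]
      exact Nat.Coprime.pow_right _ hcyp
    set u : ℕ := ((y : ZMod q)⁻¹).val with hudef
    have hYU : ((y : ℕ) : ZMod q) * ((u : ℕ) : ZMod q) = 1 := by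
      rw [hudef]
      rw [ZMod.natCast_val, ZMod.cast_id]
      exact ZMod.mul_inv_of_unit _ hunit
    -- p does not divide c := a - b * u^2
    set c : ℤ := a - b * (u:ℤ)^2 with hcdef
    have hpc : ¬ ((p:ℤ) ∣ c) := by
      intro hdvd
      apply hqnr
      have h1 : ((a : ZMod p)) = (b : ZMod p) * (u : ZMod p)^2 := by
        have : ((c : ℤ) : ZMod p) = 0 := (ZMod.intCast_zmod_eq_zero_iff_dvd _ _).mpr hdvd
        rw [hcdef] at this
        push_cast at this
        linear_combination this
      refine ⟨(b : ZMod p) * (u : ZMod p), ?_⟩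
      push_cast
      rw [h1]; ring
    -- each term equals const * ζ^z
    have key : ∀ z ∈ Finset.range p,
        (if Nat.gcd (y + m*z) q = 1 then
          Complex.exp (2 * Real.pi * Complex.I *
            ((a : ℂ) * ((y + m*z : ℕ) : ℂ) + (b : ℂ) *
              (((((y + m*z : ℕ) : ZMod q)⁻¹).val : ℕ) : ℂ)) / ((q : ℕ) : ℂ))
        else 0)
        = Complex.exp (2 * Real.pi * Complex.I * (((a*y + b*u : ℤ)) : ℂ) / (q:ℂ)) *
          Complex.exp (2 * Real.pi * Complex.I * ((c : ℂ)) / (p:ℂ)) ^ z := by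
      intro z hz
      simp only [Finset.mem_range] at hz
      have hcop : Nat.gcd (y + m*z) q = 1 := by
        have : Nat.Coprime (y + m*z) p := by
          rw [Nat.coprime_comm, hp.coprime_iff_not_dvd]
          intro hdvd
          exact hpy ((Nat.dvd_add_right (hpm.mul_right z)).mp (by rwa [Nat.add_comm] at hdvd))
        exact Nat.Coprime.pow_right _ this
      rw [if_pos hcop]
      set x : ℕ := y + m*z with hxdef
      -- inverse of x mod q
      set w : ZMod q := ((x : ℕ) : ZMod q)⁻¹ with hwdef
      have hxunit : IsUnit ((x:ℕ) : ZMod q) := by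
        rw [ZMod.isUnit_iff_coprime]; exact hcop
      have hxinv : ((x:ℕ) : ZMod q) * w = 1 := ZMod.mul_inv_of_unit _ hxunit
      -- w = u - m z u^2 in ZMod q
      have hMM : ((m:ℕ) : ZMod q) * ((m:ℕ) : ZMod q) = 0 := by
        rw [← Nat.cast_mul, ZMod.natCast_eq_zero_iff]
        exact hqmm
      have hw : w = (((u : ℤ) - (m:ℤ)*(z:ℤ)*(u:ℤ)^2 : ℤ) : ZMod q) := by
        have hmul : ((x:ℕ) : ZMod q) * (((u : ℤ) - (m:ℤ)*(z:ℤ)*(u:ℤ)^2 : ℤ) : ZMod q) = 1 := by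
          have hx' : ((x:ℕ) : ZMod q) = ((y:ℕ):ZMod q) + ((m:ℕ):ZMod q) * ((z:ℕ):ZMod q) := by
            rw [hxdef]; push_cast; ring
          push_cast
          rw [hx']
          linear_combination ((1 : ZMod q) - ((m:ZMod q))*((z:ZMod q))*((u:ZMod q))) * hYU
            - ((z:ZMod q))^2*((u:ZMod q))^2 * hMM
        calc w = 1 * w := (one_mul w).symm
          _ = (((x:ℕ) : ZMod q) * (((u : ℤ) - (m:ℤ)*(z:ℤ)*(u:ℤ)^2 : ℤ) : ZMod q)) * w := by rw [hmul]
          _ = (((u : ℤ) - (m:ℤ)*(z:ℤ)*(u:ℤ)^2 : ℤ) : ZMod q) * (((x:ℕ) : ZMod q) * w) := by ring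
          _ = _ := by rw [hxinv, mul_one]
      -- congruence of the exponent
      have hcong : (q:ℤ) ∣ ((a * x + b * (w.val : ℤ)) - ((a*y + b*u) + (m:ℤ)*(z:ℤ)*c)) := by
        have hwval : ((w.val : ℤ) : ZMod q) = (((u : ℤ) - (m:ℤ)*(z:ℤ)*(u:ℤ)^2 : ℤ) : ZMod q) := by
          rw [← hw]
          push_cast
          simp [ZMod.natCast_val, ZMod.cast_id]
        have hd : (q:ℤ) ∣ (w.val : ℤ) - ((u : ℤ) - (m:ℤ)*(z:ℤ)*(u:ℤ)^2) := by
          rwa [← ZMod.intCast_zmod_eq_zero_iff_dvd, Int.cast_sub, sub_eq_zero]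
        obtain ⟨k, hk⟩ := hd
        refine ⟨b * k, ?_⟩
        have hx2 : (x:ℤ) = (y:ℤ) + (m:ℤ)*(z:ℤ) := by rw [hxdef]; push_cast; ring
        rw [hx2, hcdef]
        linear_combination b * hk
      -- rewrite the exponential
      have e1 : Complex.exp (2 * Real.pi * Complex.I *
            ((a : ℂ) * ((x : ℕ) : ℂ) + (b : ℂ) * ((w.val : ℕ) : ℂ)) / ((q : ℕ) : ℂ))
          = Complex.exp (2 * Real.pi * Complex.I *
            (((a*y + b*u) + (m:ℤ)*(z:ℤ)*c : ℤ) : ℂ) / (q:ℂ)) := by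
        rw [show ((a : ℂ) * ((x : ℕ) : ℂ) + (b : ℂ) * ((w.val : ℕ) : ℂ))
            = (((a * x + b * (w.val : ℤ) : ℤ)) : ℂ) by push_cast; ring]
        exact exp_congr' q hq0 hcong
      rw [show ((((y + m*z : ℕ) : ZMod q)⁻¹).val : ℂ) = ((w.val : ℕ) : ℂ) by rw [hwdef]]
      rw [e1]
      -- split the exponential
      have hqC : (q:ℂ) = (m:ℂ) * (p:ℂ) := by rw [hqm]; push_cast; ring
      have hmC : (m:ℂ) ≠ 0 := Nat.cast_ne_zero.mpr hm0.ne'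
      have hpC : (p:ℂ) ≠ 0 := Nat.cast_ne_zero.mpr hp.pos.ne'
      rw [← Complex.exp_nat_mul, ← Complex.exp_add]
      congr 1
      rw [hqC]
      push_cast
      field_simp
    rw [Finset.sum_congr rfl key, ← Finset.mul_sum]
    -- geometric sum vanishes
    set ζ : ℂ := Complex.exp (2 * Real.pi * Complex.I * ((c : ℂ)) / (p:ℂ)) with hζdef
    have hζp : ζ ^ p = 1 := by
      rw [hζdef, ← Complex.exp_nat_mul]
      have hpC : (p:ℂ) ≠ 0 := Nat.cast_ne_zero.mpr hp.pos.ne'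
      rw [show (p:ℂ) * (2 * Real.pi * Complex.I * ((c : ℂ)) / (p:ℂ))
          = (c:ℂ) * (2 * Real.pi * Complex.I) by field_simp]
      exact Complex.exp_int_mul_two_pi_mul_I c
    have hζ1 : ζ ≠ 1 := by
      rw [hζdef]
      intro h1
      obtain ⟨n, hn⟩ := Complex.exp_eq_one_iff.mp h1
      apply hpc
      have hpC : (p:ℂ) ≠ 0 := Nat.cast_ne_zero.mpr hp.pos.ne'
      have hπ : (2 : ℂ) * Real.pi * Complex.I ≠ 0 := by
        simp [Real.pi_ne_zero, Complex.I_ne_zero]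
      have hc2 : (c : ℂ) = (n:ℂ) * (p:ℂ) := by
        have h2 : (c:ℂ) * (2*(Real.pi:ℂ)*Complex.I) = ((n:ℂ)*(p:ℂ)) * (2*(Real.pi:ℂ)*Complex.I) := by
          field_simp at hn
          linear_combination (2*(Real.pi:ℂ)*Complex.I) * hn
        exact mul_right_cancel₀ hπ h2
      have : c = n * p := by exact_mod_cast hc2
      exact ⟨n, by linarith [this]⟩
    rw [geom_sum_eq hζ1, hζp, sub_self, zero_div, mul_zero]
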